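/- Sewing lemma with explicit modulus: let Ξ : {(s,t) : 0 ≤ s ≤ t ≤ 1} → E be a map into a Banach space E and set δΞ_{s,t,u} = Ξ_{s,u} − Ξ_{s,t} − Ξ_{t,u}. Suppose there are constants C ≥ 0 and θ > 1 with |δΞ_{s,t,u}| ≤ C·|u−s|^{θ} for all s ≤ t ≤ u. Then there exists a unique (up to additive constant) path I : [0,1] → E such that |I_t − I_s − Ξ_{s,t}| ≤ K·C·|t−s|^{θ} for all s ≤ t, where K depends only on θ, and I_t − I_s is the limit of Riemann sums Σ_{[u,v] ∈ D} Ξ_{u,v} along partitions D of [s,t] with mesh tending to 0. -/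

import Mathlib

open Finset Filter Topology

section SewingAux

variable {E : Type*} [NormedAddCommGroup E] [NormedSpace ℝ E]

/-- Riemann sum of `Ξ` over the dyadic grid of level `n` on `[0,t]`. -/
noncomputable def sewU (Ξ : ℝ → ℝ → E) (n : ℕ) (t : ℝ) : E :=
  (∑ k ∈ Finset.range ⌊t * 2 ^ n⌋₊, Ξ ((k : ℝ) / 2 ^ n) (((k : ℝ) + 1) / 2 ^ n))
    + Ξ ((⌊t * 2 ^ n⌋₊ : ℝ) / 2 ^ n) t

/-- Defect of splitting the `k`-th level-`n` dyadic interval in half. -/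
noncomputable def sewW (Ξ : ℝ → ℝ → E) (n k : ℕ) : E :=
  Ξ ((k : ℝ) / 2 ^ n) (((k : ℝ) + 1/2) / 2 ^ n)
    + Ξ (((k : ℝ) + 1/2) / 2 ^ n) (((k : ℝ) + 1) / 2 ^ n)
    - Ξ ((k : ℝ) / 2 ^ n) (((k : ℝ) + 1) / 2 ^ n)

lemma sum_double {M : Type*} [AddCommMonoid M] (f : ℕ → M) (m : ℕ) :
    ∑ j ∈ Finset.range (2 * m), f j = ∑ k ∈ Finset.range m, (f (2 * k) + f (2 * k + 1)) := by
  induction m with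
  | zero => simp
  | succ m ih =>
      have : 2 * (m + 1) = (2 * m + 1) + 1 := by ring
      rw [this, Finset.sum_range_succ, Finset.sum_range_succ, ih, Finset.sum_range_succ]
      abel

lemma geom_Ico_le {r : ℝ} (h0 : 0 ≤ r) (h1 : r < 1) (a b : ℕ) :
    ∑ n ∈ Finset.Ico a b, r ^ n ≤ r ^ a / (1 - r) := by
  rw [Finset.sum_Ico_eq_sum_range]
  have h2 : ∀ k, r ^ (a + k) = r ^ a * r ^ k := fun k => pow_add r a k
  simp_rw [h2, ← Finset.mul_sum]
  have hsum : ∑ k ∈ Finset.range (b - a), r ^ k ≤ 1 / (1 - r) := by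
    have h1r : (0:ℝ) < 1 - r := by linarith
    rw [le_div_iff₀ h1r]
    have hg := geom_sum_mul r (b - a)
    nlinarith [pow_nonneg h0 (b - a)]
  calc r ^ a * ∑ k ∈ Finset.range (b - a), r ^ k ≤ r ^ a * (1 / (1 - r)) := by
        exact mul_le_mul_of_nonneg_left hsum (pow_nonneg h0 a)
    _ = r ^ a / (1 - r) := by ring

lemma pow_inv_rpow (θ : ℝ) (n : ℕ) :
    (((2:ℝ) ^ n)⁻¹) ^ θ = ((2:ℝ) ^ (-θ)) ^ n := by
  rw [← Real.rpow_natCast (2:ℝ) n, ← Real.rpow_neg (by norm_num : (0:ℝ) ≤ 2),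
    ← Real.rpow_natCast ((2:ℝ) ^ (-θ)) n, ← Real.rpow_mul (by norm_num : (0:ℝ) ≤ 2),
    ← Real.rpow_mul (by norm_num : (0:ℝ) ≤ 2)]
  congr 1
  ring

lemma pow_mul_inv_rpow (θ : ℝ) (n : ℕ) :
    (2:ℝ) ^ n * (((2:ℝ) ^ n)⁻¹) ^ θ = ((2:ℝ) ^ ((1:ℝ) - θ)) ^ n := by
  rw [pow_inv_rpow]
  rw [← Real.rpow_natCast (2:ℝ) n, ← Real.rpow_natCast ((2:ℝ) ^ (-θ)) n,
    ← Real.rpow_natCast ((2:ℝ) ^ ((1:ℝ) - θ)) n,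
    ← Real.rpow_mul (by norm_num : (0:ℝ) ≤ 2),
    ← Real.rpow_mul (by norm_num : (0:ℝ) ≤ 2),
    ← Real.rpow_add (by norm_num : (0:ℝ) < 2)]
  congr 1
  ring

end SewingAux

section SewingMain

variable {E : Type*} [NormedAddCommGroup E] [NormedSpace ℝ E]
variable {θ C : ℝ} {Ξ : ℝ → ℝ → E}

variable (hθ : 1 < θ) (hC : 0 ≤ C)
  (hδ : ∀ s t u : ℝ, 0 ≤ s → s ≤ t → t ≤ u → u ≤ 1 →
    ‖Ξ s u - Ξ s t - Ξ t u‖ ≤ C * (u - s) ^ θ)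

include hθ hC hδ

lemma sewW_norm (n k : ℕ) (hk : k + 1 ≤ 2 ^ n) :
    ‖sewW Ξ n k‖ ≤ C * (((2:ℝ) ^ n)⁻¹) ^ θ := by
  have h2n : (0:ℝ) < 2 ^ n := by positivity
  have hk' : ((k:ℝ) + 1) ≤ 2 ^ n := by
    have := (Nat.cast_le (α := ℝ)).2 hk
    push_cast at this
    simpa using this
  have ha : (0:ℝ) ≤ (k : ℝ) / 2 ^ n := by positivity
  have hab : (k : ℝ) / 2 ^ n ≤ ((k : ℝ) + 1/2) / 2 ^ n := by
    gcongr <;> linarith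
  have hbc : ((k : ℝ) + 1/2) / 2 ^ n ≤ ((k : ℝ) + 1) / 2 ^ n := by
    gcongr <;> linarith
  have hc1 : ((k : ℝ) + 1) / 2 ^ n ≤ 1 := by
    rw [div_le_one h2n]; exact hk'
  have hbd := hδ _ _ _ ha hab hbc hc1
  have hWeq : ‖sewW Ξ n k‖ = ‖Ξ ((k : ℝ) / 2 ^ n) (((k : ℝ) + 1) / 2 ^ n)
      - Ξ ((k : ℝ) / 2 ^ n) (((k : ℝ) + 1/2) / 2 ^ n)
      - Ξ (((k : ℝ) + 1/2) / 2 ^ n) (((k : ℝ) + 1) / 2 ^ n)‖ := by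
    rw [sewW, ← norm_neg]; congr 1; abel
  rw [hWeq]
  refine hbd.trans ?_
  have : ((k : ℝ) + 1) / 2 ^ n - (k : ℝ) / 2 ^ n = ((2:ℝ) ^ n)⁻¹ := by
    field_simp
    ring
  rw [this]

/-- Key step: difference of consecutive dyadic approximations. -/
lemma sew_step (n : ℕ) (t : ℝ) (ht0 : 0 ≤ t) (ht1 : t ≤ 1) :
    ∃ e : E, ‖e‖ ≤ C * (((2:ℝ) ^ n)⁻¹) ^ θ ∧
      sewU Ξ (n+1) t - sewU Ξ n t
        = (∑ k ∈ Finset.range ⌊t * 2 ^ n⌋₊, sewW Ξ n k) + e := by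
  have hθ0 : (0:ℝ) ≤ θ := by linarith
  have h2n : (0:ℝ) < 2 ^ n := by positivity
  have h2n1 : (0:ℝ) < 2 ^ (n+1) := by positivity
  have hps : (2:ℝ) ^ (n+1) = 2 ^ n * 2 := pow_succ 2 n
  set m := ⌊t * 2 ^ n⌋₊ with hmdef
  have hm_le : (m:ℝ) ≤ t * 2 ^ n := Nat.floor_le (by positivity)
  have hm_lt : t * 2 ^ n < (m:ℝ) + 1 := Nat.lt_floor_add_one _
  have hM : ⌊t * 2 ^ (n+1)⌋₊ = 2 * m ∨ ⌊t * 2 ^ (n+1)⌋₊ = 2 * m + 1 := by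
    by_cases hc : t * 2 ^ (n+1) < 2 * (m:ℝ) + 1
    · left
      rw [Nat.floor_eq_iff (by positivity)]
      push_cast
      constructor
      · rw [hps]; nlinarith
      · linarith
    · right
      rw [Nat.floor_eq_iff (by positivity)]
      push_cast
      constructor
      · linarith
      · rw [hps]; nlinarith
  have hpair : ∀ k ∈ Finset.range m,
      (fun j : ℕ => Ξ ((j:ℝ) / 2 ^ (n+1)) (((j:ℝ) + 1) / 2 ^ (n+1))) (2 * k)
        + (fun j : ℕ => Ξ ((j:ℝ) / 2 ^ (n+1)) (((j:ℝ) + 1) / 2 ^ (n+1))) (2 * k + 1)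
      = sewW Ξ n k + Ξ ((k : ℝ) / 2 ^ n) (((k : ℝ) + 1) / 2 ^ n) := by
    intro k _
    simp only []
    have e1 : ((2 * k : ℕ) : ℝ) / 2 ^ (n+1) = (k : ℝ) / 2 ^ n := by
      push_cast; rw [hps]; ring
    have e2 : (((2 * k : ℕ) : ℝ) + 1) / 2 ^ (n+1) = ((k : ℝ) + 1/2) / 2 ^ n := by
      push_cast; rw [hps]; ring
    have e3 : ((2 * k + 1 : ℕ) : ℝ) / 2 ^ (n+1) = ((k : ℝ) + 1/2) / 2 ^ n := by
      push_cast; rw [hps]; ring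
    have e4 : (((2 * k + 1 : ℕ) : ℝ) + 1) / 2 ^ (n+1) = ((k : ℝ) + 1) / 2 ^ n := by
      push_cast; rw [hps]; ring
    rw [e1, e2, e3, e4, sewW]
    abel
  rcases hM with hM | hM
  · refine ⟨0, by simpa using mul_nonneg hC (Real.rpow_nonneg (by positivity) θ), ?_⟩
    show (∑ j ∈ Finset.range ⌊t * 2 ^ (n+1)⌋₊,
            Ξ ((j:ℝ) / 2 ^ (n+1)) (((j:ℝ) + 1) / 2 ^ (n+1)))
          + Ξ ((⌊t * 2 ^ (n+1)⌋₊ : ℝ) / 2 ^ (n+1)) t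
        - ((∑ k ∈ Finset.range m, Ξ ((k:ℝ) / 2 ^ n) (((k:ℝ) + 1) / 2 ^ n))
          + Ξ ((m : ℝ) / 2 ^ n) t)
        = (∑ k ∈ Finset.range m, sewW Ξ n k) + 0
    rw [hM]
    rw [sum_double (fun j : ℕ => Ξ ((j:ℝ) / 2 ^ (n+1)) (((j:ℝ) + 1) / 2 ^ (n+1))) m]
    rw [Finset.sum_congr rfl hpair, Finset.sum_add_distrib]
    have e5 : ((2 * m : ℕ) : ℝ) / 2 ^ (n+1) = (m : ℝ) / 2 ^ n := by
      push_cast; rw [hps]; ring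
    rw [e5]
    abel
  · have hMle : ((2 * m : ℕ) : ℝ) + 1 ≤ t * 2 ^ (n+1) := by
      have := Nat.floor_le (R := ℝ) (show 0 ≤ t * 2 ^ (n+1) by positivity)
      rw [hM] at this
      push_cast at this ⊢
      linarith
    set b := (m : ℝ) / 2 ^ n with hbdef
    set m' := ((m : ℝ) + 1/2) / 2 ^ n with hm'def
    have hb0 : 0 ≤ b := by positivity
    have hbm' : b ≤ m' := by rw [hbdef, hm'def]; gcongr; linarith
    have hm't : m' ≤ t := by
      rw [hm'def, div_le_iff₀ h2n]
      push_cast at hMle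
      rw [hps] at hMle
      linarith
    have hbt : b ≤ t := le_trans hbm' hm't
    have htb : t - b ≤ ((2:ℝ) ^ n)⁻¹ := by
      have h1 : t ≤ ((m:ℝ) + 1) / 2 ^ n := by
        rw [le_div_iff₀ h2n]; linarith
      have h2 : ((m:ℝ) + 1) / 2 ^ n = (2 ^ n)⁻¹ + (m:ℝ) / 2 ^ n := by
        field_simp
        ring
      rw [hbdef]
      linarith
    refine ⟨Ξ b m' + Ξ m' t - Ξ b t, ?_, ?_⟩
    · have : ‖Ξ b m' + Ξ m' t - Ξ b t‖ = ‖Ξ b t - Ξ b m' - Ξ m' t‖ := by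
        rw [← norm_neg]; congr 1; abel
      rw [this]
      refine (hδ b m' t hb0 hbm' hm't ht1).trans ?_
      exact mul_le_mul_of_nonneg_left
        (Real.rpow_le_rpow (by linarith) htb hθ0) hC
    · show (∑ j ∈ Finset.range ⌊t * 2 ^ (n+1)⌋₊,
              Ξ ((j:ℝ) / 2 ^ (n+1)) (((j:ℝ) + 1) / 2 ^ (n+1)))
            + Ξ ((⌊t * 2 ^ (n+1)⌋₊ : ℝ) / 2 ^ (n+1)) t
          - ((∑ k ∈ Finset.range m, Ξ ((k:ℝ) / 2 ^ n) (((k:ℝ) + 1) / 2 ^ n))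
            + Ξ ((m : ℝ) / 2 ^ n) t)
          = (∑ k ∈ Finset.range m, sewW Ξ n k) + (Ξ b m' + Ξ m' t - Ξ b t)
      rw [hM, Finset.sum_range_succ]
      rw [sum_double (fun j : ℕ => Ξ ((j:ℝ) / 2 ^ (n+1)) (((j:ℝ) + 1) / 2 ^ (n+1))) m]
      rw [Finset.sum_congr rfl hpair, Finset.sum_add_distrib]
      have e1 : ((2 * m : ℕ) : ℝ) / 2 ^ (n+1) = b := by
        rw [hbdef]; push_cast; rw [hps]; ring
      have e2 : (((2 * m : ℕ) : ℝ) + 1) / 2 ^ (n+1) = m' := by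
        rw [hm'def]; push_cast; rw [hps]; ring
      have e3 : ((2 * m + 1 : ℕ) : ℝ) / 2 ^ (n+1) = m' := by
        rw [hm'def]; push_cast; rw [hps]; ring
      rw [e1, e2, e3, hbdef]
      abel

lemma sew_cauchy (t : ℝ) (ht0 : 0 ≤ t) (ht1 : t ≤ 1) (n : ℕ) :
    dist (sewU Ξ n t) (sewU Ξ (n+1) t) ≤ 2 * C * ((2:ℝ) ^ ((1:ℝ) - θ)) ^ n := by
  obtain ⟨e, he, heq⟩ := sew_step hθ hC hδ n t ht0 ht1
  have h2n : (0:ℝ) < 2 ^ n := by positivity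
  set ρ := (((2:ℝ) ^ n)⁻¹) ^ θ with hρdef
  have hρ : (0:ℝ) ≤ ρ := Real.rpow_nonneg (by positivity) θ
  have hcρ : 0 ≤ C * ρ := mul_nonneg hC hρ
  have hmt : ⌊t * 2 ^ n⌋₊ ≤ 2 ^ n := by
    have h : t * 2 ^ n ≤ ((2 ^ n : ℕ) : ℝ) := by push_cast; nlinarith
    calc ⌊t * 2 ^ n⌋₊ ≤ ⌊((2 ^ n : ℕ) : ℝ)⌋₊ := Nat.floor_mono h
      _ = 2 ^ n := Nat.floor_natCast _
  have hmtR : ((⌊t * 2 ^ n⌋₊ : ℕ) : ℝ) ≤ (2:ℝ) ^ n := by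
    calc ((⌊t * 2 ^ n⌋₊ : ℕ) : ℝ) ≤ ((2 ^ n : ℕ) : ℝ) := by exact_mod_cast hmt
      _ = (2:ℝ) ^ n := by push_cast; ring
  rw [dist_eq_norm, ← norm_neg]
  have hswap : -(sewU Ξ n t - sewU Ξ (n+1) t) = sewU Ξ (n+1) t - sewU Ξ n t := by abel
  rw [hswap, heq]
  have h1n : (1:ℝ) ≤ 2 ^ n := one_le_pow₀ (by norm_num)
  calc ‖(∑ k ∈ Finset.range ⌊t * 2 ^ n⌋₊, sewW Ξ n k) + e‖
      ≤ ‖∑ k ∈ Finset.range ⌊t * 2 ^ n⌋₊, sewW Ξ n k‖ + ‖e‖ := norm_add_le _ _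
    _ ≤ (∑ k ∈ Finset.range ⌊t * 2 ^ n⌋₊, ‖sewW Ξ n k‖) + ‖e‖ := by
        gcongr
        exact norm_sum_le _ _
    _ ≤ (∑ _k ∈ Finset.range ⌊t * 2 ^ n⌋₊, C * ρ) + ‖e‖ := by
        gcongr with k hk
        apply sewW_norm hθ hC hδ
        have := Finset.mem_range.mp hk
        omega
    _ = (⌊t * 2 ^ n⌋₊ : ℝ) * (C * ρ) + ‖e‖ := by
        rw [Finset.sum_const, Finset.card_range, nsmul_eq_mul]
    _ ≤ (2:ℝ) ^ n * (C * ρ) + C * ρ :=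
        add_le_add (mul_le_mul_of_nonneg_right hmtR hcρ) he
    _ ≤ (2:ℝ) ^ n * (C * ρ) + (2:ℝ) ^ n * (C * ρ) := by nlinarith
    _ = 2 * C * ((2:ℝ) ^ n * ρ) := by ring
    _ = 2 * C * ((2:ℝ) ^ ((1:ℝ) - θ)) ^ n := by rw [hρdef, pow_mul_inv_rpow]

noncomputable def sewK (θ : ℝ) : ℝ :=
  (2:ℝ) ^ θ + 1 + (2:ℝ) ^ (θ-1) / (1 - (2:ℝ) ^ ((1:ℝ)-θ))
    + 3 * (2:ℝ) ^ θ / (1 - (2:ℝ) ^ (-θ))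

set_option maxHeartbeats 1000000 in
omit hC hδ in
lemma sewK_pos' : 0 < sewK θ := by
  have h1 : 0 < (2:ℝ)^θ := Real.rpow_pos_of_pos two_pos θ
  have h2 : 0 < (2:ℝ)^(θ-1) := Real.rpow_pos_of_pos two_pos _
  have hq1 : (2:ℝ)^((1:ℝ)-θ) < 1 := Real.rpow_lt_one_of_one_lt_of_neg one_lt_two (by linarith)
  have hp1 : (2:ℝ)^(-θ) < 1 := Real.rpow_lt_one_of_one_lt_of_neg one_lt_two (by linarith)
  have hq0 : 0 < (2:ℝ)^((1:ℝ)-θ) := Real.rpow_pos_of_pos two_pos _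
  have hp0 : 0 < (2:ℝ)^(-θ) := Real.rpow_pos_of_pos two_pos _
  have d1 : (0:ℝ) < 1 - (2:ℝ)^((1:ℝ)-θ) := by linarith
  have d2 : (0:ℝ) < 1 - (2:ℝ)^(-θ) := by linarith
  have e1 : (0:ℝ) ≤ (2:ℝ)^(θ-1)/(1 - (2:ℝ)^((1:ℝ)-θ)) := le_of_lt (div_pos h2 d1)
  have e2 : (0:ℝ) ≤ 3*(2:ℝ)^θ/(1 - (2:ℝ)^(-θ)) := le_of_lt (div_pos (by linarith) d2)
  rw [sewK]
  linarith

set_option maxHeartbeats 1000000 in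
lemma sew_main (I : ℝ → E)
    (hI : ∀ r : ℝ, 0 ≤ r → r ≤ 1 → Tendsto (fun n => sewU Ξ n r) atTop (𝓝 (I r)))
    (s t : ℝ) (hs : 0 ≤ s) (hst : s ≤ t) (ht1 : t ≤ 1) :
    ‖I t - I s - Ξ s t‖ ≤ sewK θ * C * (t - s) ^ θ := by
  have hθ0 : (0:ℝ) ≤ θ := by linarith
  have hθne : θ ≠ 0 := by linarith
  set q := (2:ℝ) ^ ((1:ℝ) - θ) with hqdef
  set p := (2:ℝ) ^ (-θ) with hpdef
  have hq0 : 0 < q := Real.rpow_pos_of_pos two_pos _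
  have hq1 : q < 1 := Real.rpow_lt_one_of_one_lt_of_neg one_lt_two (by linarith)
  have hp0 : 0 < p := Real.rpow_pos_of_pos two_pos _
  have hp1 : p < 1 := Real.rpow_lt_one_of_one_lt_of_neg one_lt_two (by linarith)
  rcases eq_or_lt_of_le hst with rfl | hlt
  · have h00 := hδ s s s hs (le_refl _) (le_refl _) ht1
    have e1 : Ξ s s - Ξ s s - Ξ s s = -Ξ s s := by abel
    rw [e1, sub_self, Real.zero_rpow hθne, mul_zero, norm_neg] at h00
    have e2 : I s - I s - Ξ s s = -Ξ s s := by abel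
    rw [e2, sub_self, Real.zero_rpow hθne, mul_zero, norm_neg]
    exact h00
  · have hts1 : t - s ≤ 1 := by linarith
    have hts0 : 0 < t - s := by linarith
    obtain ⟨N, hN⟩ := pow_unbounded_of_one_lt ((t - s)⁻¹) (by norm_num : (1:ℝ) < 2)
    have hPex : ∃ n : ℕ, ((2:ℝ) ^ (n+1))⁻¹ < t - s := by
      refine ⟨N, ?_⟩
      have h1 : (t - s)⁻¹ < 2 ^ (N+1) := by
        calc (t - s)⁻¹ < 2 ^ N := hN
          _ ≤ 2 ^ (N+1) := by
              apply pow_le_pow_right₀ (by norm_num) (Nat.le_succ N)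
      have h2 : (0:ℝ) < 2 ^ (N+1) := by positivity
      rw [inv_lt_comm₀ h2 hts0]
      exact h1
    set n₀ := Nat.find hPex with hn₀def
    have hfind : ((2:ℝ) ^ (n₀+1))⁻¹ < t - s := Nat.find_spec hPex
    have hmin : t - s ≤ ((2:ℝ) ^ n₀)⁻¹ := by
      rcases Nat.eq_zero_or_pos n₀ with h0 | hpos
      · rw [h0]; simpa using hts1
      · have hm := Nat.find_min hPex (show n₀ - 1 < n₀ from Nat.sub_lt hpos one_pos)
        have heq : n₀ - 1 + 1 = n₀ := by omega
        rw [heq] at hm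
        exact not_lt.mp hm
    have h2n : (0:ℝ) < 2 ^ n₀ := by positivity
    have h2n₀ : ((2:ℝ) ^ n₀)⁻¹ ≤ 2 * (t - s) := by
      have he : ((2:ℝ) ^ (n₀+1))⁻¹ = ((2:ℝ) ^ n₀)⁻¹ / 2 := by
        rw [pow_succ]; field_simp
      rw [he] at hfind
      linarith
    -- rpow facts at n₀
    have hqn₀ : q ^ n₀ ≤ (2 * (t-s)) ^ (θ - 1) := by
      have hneg : (2:ℝ) ^ (-(θ-1)) = q := by rw [hqdef]; congr 1; ring
      have e : q ^ n₀ = (((2:ℝ) ^ n₀)⁻¹) ^ (θ-1) := by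
        rw [pow_inv_rpow (θ-1) n₀, hneg]
      rw [e]
      exact Real.rpow_le_rpow (by positivity) h2n₀ (by linarith)
    have hpn₀ : p ^ n₀ ≤ (2 * (t-s)) ^ θ := by
      have e : p ^ n₀ = (((2:ℝ) ^ n₀)⁻¹) ^ θ := by rw [pow_inv_rpow θ n₀, hpdef]
      rw [e]
      exact Real.rpow_le_rpow (by positivity) h2n₀ hθ0
    have hmul1 : (2 * (t-s)) ^ (θ-1) = (2:ℝ)^(θ-1) * (t-s)^(θ-1) :=
      Real.mul_rpow (by norm_num) hts0.le
    have hmul2 : (2 * (t-s)) ^ θ = (2:ℝ)^θ * (t-s)^θ :=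
      Real.mul_rpow (by norm_num) hts0.le
    have hsplit : (t-s) ^ θ = (t-s) * (t-s)^(θ-1) := by
      rw [show θ = 1 + (θ-1) by ring, Real.rpow_add hts0, Real.rpow_one]
      ring_nf
    -- base case at level n₀
    set ms := ⌊s * 2 ^ n₀⌋₊ with hmsdef
    set mt := ⌊t * 2 ^ n₀⌋₊ with hmtdef
    have hmsle : (ms:ℝ) ≤ s * 2 ^ n₀ := Nat.floor_le (mul_nonneg hs (by positivity))
    have hmslt : s * 2 ^ n₀ < (ms:ℝ) + 1 := Nat.lt_floor_add_one _
    have hmtle : (mt:ℝ) ≤ t * 2 ^ n₀ := Nat.floor_le (mul_nonneg (le_trans hs hst) (by positivity))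
    have hmtlt : t * 2 ^ n₀ < (mt:ℝ) + 1 := Nat.lt_floor_add_one _
    have hmm : ms ≤ mt := Nat.floor_mono (by nlinarith)
    have hmt2 : mt < ms + 2 := by
      rw [hmtdef]
      rw [Nat.floor_lt (mul_nonneg (le_trans hs hst) (by positivity))]
      push_cast
      have h1 : (t - s) * 2 ^ n₀ ≤ 1 := by
        calc (t - s) * 2 ^ n₀ ≤ ((2:ℝ)^n₀)⁻¹ * 2^n₀ := by nlinarith
          _ = 1 := by field_simp
      nlinarith
    set b := (ms:ℝ) / 2 ^ n₀ with hbdef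
    have hb0 : 0 ≤ b := by positivity
    have hbs : b ≤ s := by rw [hbdef, div_le_iff₀ h2n]; exact hmsle
    have hbase : ‖sewU Ξ n₀ t - sewU Ξ n₀ s - Ξ s t‖ ≤ C * ((2:ℝ)^θ + 1) * (t-s)^θ := by
      have h2ts : (((2:ℝ)^n₀)⁻¹) ^ θ ≤ (2:ℝ)^θ * (t-s)^θ := by
        have := Real.rpow_le_rpow (by positivity) h2n₀ hθ0
        rwa [hmul2] at this
      have h2θ0 : (0:ℝ) < (2:ℝ)^θ := Real.rpow_pos_of_pos two_pos θ
      have htsθ0 : (0:ℝ) ≤ (t-s)^θ := Real.rpow_nonneg hts0.le θ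
      have hcase : mt = ms ∨ mt = ms + 1 := by omega
      rcases hcase with he | he
      · have hUdiff : sewU Ξ n₀ t - sewU Ξ n₀ s = Ξ b t - Ξ b s := by
          show (∑ k ∈ Finset.range mt, Ξ ((k:ℝ) / 2^n₀) (((k:ℝ)+1) / 2^n₀))
              + Ξ ((mt:ℝ) / 2^n₀) t
              - ((∑ k ∈ Finset.range ms, Ξ ((k:ℝ) / 2^n₀) (((k:ℝ)+1) / 2^n₀))
              + Ξ ((ms:ℝ) / 2^n₀) s) = Ξ b t - Ξ b s
          rw [he, hbdef]
          abel
        rw [hUdiff]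
        have htb : t - b ≤ ((2:ℝ)^n₀)⁻¹ := by
          have h1 : t * 2^n₀ < (ms:ℝ) + 1 := by
            have : (mt:ℝ) = (ms:ℝ) := by exact_mod_cast congrArg (Nat.cast (R := ℝ)) he
            linarith
          have h2 : t ≤ ((ms:ℝ)+1)/2^n₀ := by
            rw [le_div_iff₀ h2n]; linarith
          have e : ((ms:ℝ)+1)/2^n₀ = b + ((2:ℝ)^n₀)⁻¹ := by
            rw [hbdef]; field_simp
          linarith
        have hδb := hδ b s t hb0 hbs hst ht1
        refine hδb.trans ?_
        calc C * (t - b)^θ ≤ C * ((((2:ℝ)^n₀)⁻¹) ^ θ) := by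
              apply mul_le_mul_of_nonneg_left _ hC
              exact Real.rpow_le_rpow (by linarith) htb hθ0
          _ ≤ C * ((2:ℝ)^θ * (t-s)^θ) := mul_le_mul_of_nonneg_left h2ts hC
          _ = C * (2:ℝ)^θ * (t-s)^θ := by ring
          _ ≤ C * ((2:ℝ)^θ + 1) * (t-s)^θ := by nlinarith [mul_nonneg hC htsθ0]
      · set g := ((ms:ℝ)+1) / 2 ^ n₀ with hgdef
        have hsg : s ≤ g := by
          rw [hgdef, le_div_iff₀ h2n]; linarith
        have hgt : g ≤ t := by
          rw [hgdef, div_le_iff₀ h2n]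
          have : ((ms:ℝ)+1) ≤ t * 2^n₀ := by
            have : (mt:ℝ) = (ms:ℝ) + 1 := by exact_mod_cast congrArg (Nat.cast (R := ℝ)) he
            linarith
          linarith
        have hgb : g - b = ((2:ℝ)^n₀)⁻¹ := by
          rw [hgdef, hbdef]; field_simp; ring
        have hUdiff : sewU Ξ n₀ t - sewU Ξ n₀ s = Ξ b g + Ξ g t - Ξ b s := by
          show (∑ k ∈ Finset.range mt, Ξ ((k:ℝ) / 2^n₀) (((k:ℝ)+1) / 2^n₀))
              + Ξ ((mt:ℝ) / 2^n₀) t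
              - ((∑ k ∈ Finset.range ms, Ξ ((k:ℝ) / 2^n₀) (((k:ℝ)+1) / 2^n₀))
              + Ξ ((ms:ℝ) / 2^n₀) s) = Ξ b g + Ξ g t - Ξ b s
          rw [he, Finset.sum_range_succ]
          have hc : ((ms + 1 : ℕ) : ℝ) = (ms:ℝ) + 1 := by push_cast; ring
          rw [hc, hbdef, hgdef]
          abel
        rw [hUdiff]
        have key : Ξ b g + Ξ g t - Ξ b s - Ξ s t
            = (Ξ b g - Ξ b s - Ξ s g) - (Ξ s t - Ξ s g - Ξ g t) := by abel
        rw [key]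
        calc ‖(Ξ b g - Ξ b s - Ξ s g) - (Ξ s t - Ξ s g - Ξ g t)‖
            ≤ ‖Ξ b g - Ξ b s - Ξ s g‖ + ‖Ξ s t - Ξ s g - Ξ g t‖ := norm_sub_le _ _
          _ ≤ C * (g - b)^θ + C * (t - s)^θ :=
              add_le_add (hδ b s g hb0 hbs hsg (le_trans hgt ht1)) (hδ s g t hs hsg hgt ht1)
          _ ≤ C * ((2:ℝ)^θ * (t-s)^θ) + C * (t-s)^θ := by
              rw [hgb]
              exact add_le_add (mul_le_mul_of_nonneg_left h2ts hC) (le_refl _)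
          _ = C * ((2:ℝ)^θ + 1) * (t-s)^θ := by ring
    -- induction from n₀
    set D := fun m : ℕ => sewU Ξ m t - sewU Ξ m s - Ξ s t with hDdef
    have hstep : ∀ n : ℕ, ‖D (n+1) - D n‖ ≤ C*(t-s)*q^n + 3*C*p^n := by
      intro n
      have h2nn : (0:ℝ) < 2 ^ n := by positivity
      obtain ⟨et, het, heqt⟩ := sew_step hθ hC hδ n t (le_trans hs hst) ht1
      obtain ⟨es, hes, heqs⟩ := sew_step hθ hC hδ n s hs (le_trans hst ht1)
      have hflmono : ⌊s*2^n⌋₊ ≤ ⌊t*2^n⌋₊ := Nat.floor_mono (by nlinarith)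
      have hDeq : D (n+1) - D n
          = (∑ k ∈ Finset.Ico ⌊s*2^n⌋₊ ⌊t*2^n⌋₊, sewW Ξ n k) + (et - es) := by
        have e1 : D (n+1) - D n
            = (sewU Ξ (n+1) t - sewU Ξ n t) - (sewU Ξ (n+1) s - sewU Ξ n s) := by
          simp only [hDdef]; abel
        rw [e1, heqt, heqs, Finset.sum_Ico_eq_sub _ hflmono]
        abel
      set ρ := (((2:ℝ) ^ n)⁻¹) ^ θ with hρdef
      have hρ0 : (0:ℝ) ≤ ρ := Real.rpow_nonneg (by positivity) θ
      have hmtn : ⌊t * 2 ^ n⌋₊ ≤ 2 ^ n := by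
        have h : t * 2 ^ n ≤ ((2 ^ n : ℕ) : ℝ) := by push_cast; nlinarith
        calc ⌊t * 2 ^ n⌋₊ ≤ ⌊((2 ^ n : ℕ) : ℝ)⌋₊ := Nat.floor_mono h
          _ = 2 ^ n := Nat.floor_natCast _
      have hcard : ((⌊t*2^n⌋₊ - ⌊s*2^n⌋₊ : ℕ) : ℝ) ≤ (t-s) * 2^n + 1 := by
        rw [Nat.cast_sub hflmono]
        have h1 : (⌊t*2^n⌋₊ : ℝ) ≤ t * 2^n := Nat.floor_le (mul_nonneg (le_trans hs hst) (by positivity))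
        have h2 : s * 2^n < (⌊s*2^n⌋₊ : ℝ) + 1 := Nat.lt_floor_add_one _
        nlinarith
      rw [hDeq]
      calc ‖(∑ k ∈ Finset.Ico ⌊s*2^n⌋₊ ⌊t*2^n⌋₊, sewW Ξ n k) + (et - es)‖
          ≤ ‖∑ k ∈ Finset.Ico ⌊s*2^n⌋₊ ⌊t*2^n⌋₊, sewW Ξ n k‖ + (‖et‖ + ‖es‖) := by
            refine (norm_add_le _ _).trans ?_
            gcongr
            exact norm_sub_le _ _
        _ ≤ (∑ k ∈ Finset.Ico ⌊s*2^n⌋₊ ⌊t*2^n⌋₊, ‖sewW Ξ n k‖) + (‖et‖ + ‖es‖) := by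
            gcongr
            exact norm_sum_le _ _
        _ ≤ (∑ _k ∈ Finset.Ico ⌊s*2^n⌋₊ ⌊t*2^n⌋₊, C * ρ) + (‖et‖ + ‖es‖) := by
            gcongr with k hk
            apply sewW_norm hθ hC hδ
            have := (Finset.mem_Ico.mp hk).2
            omega
        _ = ((⌊t*2^n⌋₊ - ⌊s*2^n⌋₊ : ℕ) : ℝ) * (C * ρ) + (‖et‖ + ‖es‖) := by
            rw [Finset.sum_const, Nat.card_Ico, nsmul_eq_mul]
        _ ≤ ((t-s) * 2^n + 1) * (C * ρ) + (C * ρ + C * ρ) := by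
            have hcρ : (0:ℝ) ≤ C * ρ := mul_nonneg hC hρ0
            gcongr <;> first
              | exact hcρ
              | exact hcard
              | exact het
              | exact hes
        _ = C * (t-s) * (2^n * ρ) + 3 * C * ρ := by ring
        _ = C*(t-s)*q^n + 3*C*p^n := by
            rw [hρdef, pow_mul_inv_rpow, pow_inv_rpow]
    have hDbound : ∀ m, n₀ ≤ m → ‖D m‖ ≤ ‖D n₀‖
        + C*(t-s)*(∑ n ∈ Finset.Ico n₀ m, q^n) + 3*C*(∑ n ∈ Finset.Ico n₀ m, p^n) := by
      intro m hm
      induction m, hm using Nat.le_induction with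
      | base => simp
      | succ m hm ih =>
          have h1 : ‖D (m+1)‖ ≤ ‖D m‖ + ‖D (m+1) - D m‖ := by
            have e := norm_add_le (D m) (D (m+1) - D m)
            simpa using e
          rw [Finset.sum_Ico_succ_top hm, Finset.sum_Ico_succ_top hm]
          have h2 := hstep m
          have e1 : C*(t-s)*((∑ n ∈ Finset.Ico n₀ m, q^n) + q^m)
              = C*(t-s)*(∑ n ∈ Finset.Ico n₀ m, q^n) + C*(t-s)*q^m := by ring
          have e2 : 3*C*((∑ n ∈ Finset.Ico n₀ m, p^n) + p^m)
              = 3*C*(∑ n ∈ Finset.Ico n₀ m, p^n) + 3*C*p^m := by ring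
          rw [e1, e2]
          linarith
    have hbound_all : ∀ m, n₀ ≤ m → ‖D m‖ ≤ sewK θ * C * (t-s)^θ := by
      intro m hm
      have h1 := hDbound m hm
      have hgq := geom_Ico_le hq0.le hq1 n₀ m
      have hgp := geom_Ico_le hp0.le hp1 n₀ m
      have hq1' : (0:ℝ) < 1 - q := by linarith
      have hp1' : (0:ℝ) < 1 - p := by linarith
      have hcts : (0:ℝ) ≤ C * (t-s) := mul_nonneg hC hts0.le
      have h2 : C*(t-s)*(∑ n ∈ Finset.Ico n₀ m, q^n) ≤ C*(t-s)*(q^n₀/(1-q)) :=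
        mul_le_mul_of_nonneg_left hgq hcts
      have h3 : 3*C*(∑ n ∈ Finset.Ico n₀ m, p^n) ≤ 3*C*(p^n₀/(1-p)) :=
        mul_le_mul_of_nonneg_left hgp (by linarith)
      have h4 : C*(t-s)*(q^n₀/(1-q)) ≤ C*(t-s)*(((2:ℝ)^(θ-1) * (t-s)^(θ-1))/(1-q)) := by
        apply mul_le_mul_of_nonneg_left _ hcts
        have hx : q^n₀ ≤ (2:ℝ)^(θ-1) * (t-s)^(θ-1) := hmul1 ▸ hqn₀
        exact (div_le_div_iff_of_pos_right hq1').mpr hx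
      have h5 : 3*C*(p^n₀/(1-p)) ≤ 3*C*(((2:ℝ)^θ * (t-s)^θ)/(1-p)) := by
        apply mul_le_mul_of_nonneg_left _ (by linarith : (0:ℝ) ≤ 3*C)
        have hx : p^n₀ ≤ (2:ℝ)^θ * (t-s)^θ := hmul2 ▸ hpn₀
        exact (div_le_div_iff_of_pos_right hp1').mpr hx
      have hDn₀ : D n₀ = sewU Ξ n₀ t - sewU Ξ n₀ s - Ξ s t := rfl
      have hb : ‖D n₀‖ ≤ C * ((2:ℝ)^θ + 1) * (t-s)^θ := by rw [hDn₀]; exact hbase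
      have e4 : C*(t-s)*(((2:ℝ)^(θ-1) * (t-s)^(θ-1))/(1-q))
          = ((2:ℝ)^(θ-1)/(1-q)) * C * ((t-s)^θ) := by
        rw [hsplit]; field_simp
      have e5 : 3*C*(((2:ℝ)^θ * (t-s)^θ)/(1-p))
          = (3*(2:ℝ)^θ/(1-p)) * C * ((t-s)^θ) := by
        field_simp
      have hKexp : sewK θ * C * (t-s)^θ
          = C * ((2:ℝ)^θ + 1) * (t-s)^θ + ((2:ℝ)^(θ-1)/(1-q)) * C * ((t-s)^θ)
            + (3*(2:ℝ)^θ/(1-p)) * C * ((t-s)^θ) := by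
        rw [sewK, ← hqdef, ← hpdef]; ring
      rw [hKexp]
      linarith [h1, h2, h3, h4, h5, hb, e4, e5]
    have hTend : Tendsto (fun m => ‖D m‖) atTop (𝓝 ‖I t - I s - Ξ s t‖) := by
      have := ((hI t (le_trans hs hst) ht1).sub (hI s hs (le_trans hst ht1))).sub
        (tendsto_const_nhds : Tendsto (fun _ : ℕ => Ξ s t) atTop (𝓝 (Ξ s t)))
      exact this.norm
    exact le_of_tendsto hTend (eventually_atTop.mpr ⟨n₀, hbound_all⟩)

end SewingMain


set_option maxHeartbeats 1000000 in
/-- Sewing lemma with explicit modulus: if `δΞ_{s,t,u} = Ξ_{s,u} − Ξ_{s,t} − Ξ_{t,u}`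
satisfies `‖δΞ_{s,t,u}‖ ≤ C·|u−s|^θ` with `θ > 1`, then there is a path `I`,
unique up to an additive constant, with `‖I_t − I_s − Ξ_{s,t}‖ ≤ K·C·|t−s|^θ`
(`K` depending only on `θ`), and `I_t − I_s` is the limit of Riemann sums
`Σ_{[u,v]∈D} Ξ_{u,v}` along partitions with mesh tending to `0`. -/
theorem statement18 (E : Type*) [NormedAddCommGroup E] [NormedSpace ℝ E]
    [CompleteSpace E] (θ : ℝ) (hθ : 1 < θ) :
    ∃ K : ℝ, 0 < K ∧
      ∀ (Ξ : ℝ → ℝ → E) (C : ℝ), 0 ≤ C →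
        (∀ s t u : ℝ, 0 ≤ s → s ≤ t → t ≤ u → u ≤ 1 →
          ‖Ξ s u - Ξ s t - Ξ t u‖ ≤ C * (u - s) ^ θ) →
        ∃ I : ℝ → E,
          (∀ s t : ℝ, 0 ≤ s → s ≤ t → t ≤ 1 →
            ‖I t - I s - Ξ s t‖ ≤ K * C * (t - s) ^ θ) ∧
          (∀ I' : ℝ → E,
            (∀ s t : ℝ, 0 ≤ s → s ≤ t → t ≤ 1 →
              ‖I' t - I' s - Ξ s t‖ ≤ K * C * (t - s) ^ θ) →
            ∃ c : E, ∀ t : ℝ, 0 ≤ t → t ≤ 1 → I' t = I t + c) ∧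
          (∀ s t : ℝ, 0 ≤ s → s ≤ t → t ≤ 1 → ∀ ε > (0:ℝ), ∃ δ > (0:ℝ),
            ∀ (n : ℕ) (u : ℕ → ℝ), u 0 = s → u n = t →
              (∀ i < n, u i ≤ u (i + 1)) → (∀ i < n, u (i + 1) - u i < δ) →
              ‖(∑ i ∈ Finset.range n, Ξ (u i) (u (i + 1))) - (I t - I s)‖ < ε) := by
  have hθ0 : (0:ℝ) ≤ θ := by linarith
  have hθ1 : (0:ℝ) ≤ θ - 1 := by linarith
  have hθne : θ - 1 ≠ 0 := by linarith
  have hq1 : (2:ℝ)^((1:ℝ)-θ) < 1 := Real.rpow_lt_one_of_one_lt_of_neg one_lt_two (by linarith)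
  refine ⟨sewK θ, sewK_pos' hθ, ?_⟩
  intro Ξ C hC hδ
  have hex : ∀ t : ℝ, ∃ L : E,
      (0 ≤ t → t ≤ 1 → Tendsto (fun n => sewU Ξ n t) atTop (𝓝 L)) := by
    intro t
    by_cases h : 0 ≤ t ∧ t ≤ 1
    · obtain ⟨L, hL⟩ := cauchySeq_tendsto_of_complete
        (cauchySeq_of_le_geometric _ (2*C) hq1 (fun n => sew_cauchy hθ hC hδ t h.1 h.2 n))
      exact ⟨L, fun _ _ => hL⟩
    · exact ⟨0, fun h1 h2 => absurd ⟨h1, h2⟩ h⟩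
  choose I hI using hex
  have claim1 : ∀ s t : ℝ, 0 ≤ s → s ≤ t → t ≤ 1 →
      ‖I t - I s - Ξ s t‖ ≤ sewK θ * C * (t-s)^θ :=
    fun s t hs hst ht1 => sew_main hθ hC hδ I (fun r h1 h2 => hI r h1 h2) s t hs hst ht1
  have hKC0 : 0 ≤ sewK θ * C := mul_nonneg (sewK_pos' hθ).le hC
  refine ⟨I, claim1, ?_, ?_⟩
  · -- uniqueness up to additive constant
    intro I' hI'
    refine ⟨I' 0 - I 0, fun t ht0 ht1 => ?_⟩
    have key : ∀ n : ℕ, 1 ≤ n →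
        ‖(I' t - I t) - (I' 0 - I 0)‖ ≤ 2*(sewK θ * C)*t^θ * (n:ℝ)^((1:ℝ)-θ) := by
      intro n hn
      have hn0 : (0:ℝ) < (n:ℝ) := by exact_mod_cast hn
      have htel : ∑ k ∈ Finset.range n,
          ((I' (((k:ℝ)+1)*t/n) - I (((k:ℝ)+1)*t/n)) - (I' ((k:ℝ)*t/n) - I ((k:ℝ)*t/n)))
          = (I' t - I t) - (I' 0 - I 0) := by
        have := Finset.sum_range_sub (fun k => I' ((k:ℝ)*t/n) - I ((k:ℝ)*t/n)) n
        have en : ((n:ℕ):ℝ)*t/(n:ℝ) = t := by field_simp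
        have e0 : ((0:ℕ):ℝ)*t/(n:ℝ) = 0 := by simp
        rw [en, e0] at this
        rw [← this]
        apply Finset.sum_congr rfl
        intro k _
        have : ((k+1:ℕ):ℝ) = (k:ℝ)+1 := by push_cast; ring
        rw [this]
      have hterm : ∀ k ∈ Finset.range n,
          ‖(I' (((k:ℝ)+1)*t/n) - I (((k:ℝ)+1)*t/n)) - (I' ((k:ℝ)*t/n) - I ((k:ℝ)*t/n))‖
            ≤ 2*(sewK θ * C)*(t/n)^θ := by
        intro k hk
        have hkn : (k:ℝ) + 1 ≤ (n:ℝ) := by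
          exact_mod_cast Nat.succ_le_of_lt (Finset.mem_range.mp hk)
        have hu0 : 0 ≤ (k:ℝ)*t/n := by positivity
        have huv : (k:ℝ)*t/n ≤ ((k:ℝ)+1)*t/n := by
          apply (div_le_div_iff_of_pos_right hn0).mpr
          nlinarith
        have hv1 : ((k:ℝ)+1)*t/n ≤ 1 := by
          have : ((k:ℝ)+1)*t/n ≤ t := by
            rw [div_le_iff₀ hn0]
            nlinarith
          linarith
        have h1 := hI' ((k:ℝ)*t/n) (((k:ℝ)+1)*t/n) hu0 huv hv1
        have h2 := claim1 ((k:ℝ)*t/n) (((k:ℝ)+1)*t/n) hu0 huv hv1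
        have hd : ((k:ℝ)+1)*t/n - (k:ℝ)*t/n = t/n := by field_simp; ring
        rw [hd] at h1 h2
        have e : (I' (((k:ℝ)+1)*t/n) - I (((k:ℝ)+1)*t/n)) - (I' ((k:ℝ)*t/n) - I ((k:ℝ)*t/n))
            = (I' (((k:ℝ)+1)*t/n) - I' ((k:ℝ)*t/n) - Ξ ((k:ℝ)*t/n) (((k:ℝ)+1)*t/n))
              - (I (((k:ℝ)+1)*t/n) - I ((k:ℝ)*t/n) - Ξ ((k:ℝ)*t/n) (((k:ℝ)+1)*t/n)) := by
          abel
        rw [e]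
        calc ‖_ - _‖ ≤ _ + _ := norm_sub_le _ _
          _ ≤ sewK θ * C * (t/n)^θ + sewK θ * C * (t/n)^θ := add_le_add h1 h2
          _ = 2*(sewK θ * C)*(t/n)^θ := by ring
      calc ‖(I' t - I t) - (I' 0 - I 0)‖
          = ‖∑ k ∈ Finset.range n, ((I' (((k:ℝ)+1)*t/n) - I (((k:ℝ)+1)*t/n))
              - (I' ((k:ℝ)*t/n) - I ((k:ℝ)*t/n)))‖ := by rw [htel]
        _ ≤ ∑ k ∈ Finset.range n, ‖(I' (((k:ℝ)+1)*t/n) - I (((k:ℝ)+1)*t/n))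
              - (I' ((k:ℝ)*t/n) - I ((k:ℝ)*t/n))‖ := norm_sum_le _ _
        _ ≤ ∑ _k ∈ Finset.range n, 2*(sewK θ * C)*(t/n)^θ := Finset.sum_le_sum hterm
        _ = (n:ℝ) * (2*(sewK θ * C)*(t/n)^θ) := by
            rw [Finset.sum_const, Finset.card_range, nsmul_eq_mul]
        _ = 2*(sewK θ * C)*t^θ * (n:ℝ)^((1:ℝ)-θ) := by
            rw [Real.div_rpow ht0 hn0.le]
            have h2 : (n:ℝ) / (n:ℝ)^θ = (n:ℝ)^((1:ℝ)-θ) := by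
              rw [Real.rpow_sub hn0, Real.rpow_one]
            rw [← h2]
            field_simp
    have hlim : Tendsto (fun n : ℕ => 2*(sewK θ * C)*t^θ * (n:ℝ)^((1:ℝ)-θ)) atTop (𝓝 0) := by
      have h0 : Tendsto (fun x : ℝ => x^(-(θ-1))) atTop (𝓝 0) :=
        tendsto_rpow_neg_atTop (by linarith)
      have h1 : Tendsto (fun n : ℕ => ((n:ℝ))^((1:ℝ)-θ)) atTop (𝓝 0) := by
        have := h0.comp tendsto_natCast_atTop_atTop
        have e : (fun n : ℕ => ((n:ℝ))^((1:ℝ)-θ)) = (fun x : ℝ => x^(-(θ-1))) ∘ Nat.cast := by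
          funext n
          simp only [Function.comp_apply]
          congr 1
          ring
        rw [e]
        exact this
      have := h1.const_mul (2*(sewK θ * C)*t^θ)
      simpa [mul_comm, mul_assoc] using this
    have hle : ‖(I' t - I t) - (I' 0 - I 0)‖ ≤ 0 :=
      ge_of_tendsto hlim (eventually_atTop.mpr ⟨1, key⟩)
    have hz : (I' t - I t) - (I' 0 - I 0) = 0 :=
      norm_le_zero_iff.mp hle
    have : I' t - I t = I' 0 - I 0 := by
      have := sub_eq_zero.mp hz
      exact this
    rw [← this]
    abel
  · -- Riemann sums
    intro s t hs hst ht1 ε hε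
    set M := sewK θ * C + 1 with hMdef
    have hM : 0 < M := by rw [hMdef]; linarith
    have hεM : 0 < ε / M := div_pos hε hM
    set δ' := min 1 ((ε/M)^((θ-1)⁻¹)) with hδ'def
    have hδ'0 : 0 < δ' := lt_min one_pos (Real.rpow_pos_of_pos hεM _)
    refine ⟨δ', hδ'0, ?_⟩
    intro n u hu0 hun humono hmesh
    have hchainle : ∀ d : ℕ, ∀ i, i + d ≤ n → u i ≤ u (i + d) := by
      intro d
      induction d with
      | zero => intro i _; simp
      | succ d ih =>
          intro i h
          calc u i ≤ u (i+d) := ih i (by omega)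
            _ ≤ u (i+d+1) := humono _ (by omega)
    have hchain : ∀ i, i ≤ n → s ≤ u i ∧ u i ≤ t := by
      intro i hi
      constructor
      · rw [← hu0]
        have := hchainle i 0 (by omega)
        simpa using this
      · rw [← hun]
        have := hchainle (n - i) i (by omega)
        have e : i + (n - i) = n := by omega
        rwa [e] at this
    have htel : ∑ i ∈ Finset.range n, (I (u (i+1)) - I (u i)) = I t - I s := by
      rw [Finset.sum_range_sub (fun i => I (u i)), hun, hu0]
    have hsum : (∑ i ∈ Finset.range n, Ξ (u i) (u (i + 1))) - (I t - I s)
        = ∑ i ∈ Finset.range n, (Ξ (u i) (u (i+1)) - (I (u (i+1)) - I (u i))) := by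
      rw [Finset.sum_sub_distrib, htel]
    rw [hsum]
    have hδ'le : δ' ^ (θ-1) ≤ ε / M := by
      have h1 : δ' ≤ (ε/M)^((θ-1)⁻¹) := min_le_right _ _
      have h2 := Real.rpow_le_rpow hδ'0.le h1 hθ1
      rwa [← Real.rpow_mul hεM.le, inv_mul_cancel₀ hθne, Real.rpow_one] at h2
    have hterm : ∀ i ∈ Finset.range n,
        ‖Ξ (u i) (u (i+1)) - (I (u (i+1)) - I (u i))‖
          ≤ sewK θ * C * (δ'^(θ-1) * (u (i+1) - u i)) := by
      intro i hi
      have hin : i < n := Finset.mem_range.mp hi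
      have h0i : 0 ≤ u i := le_trans hs (hchain i (by omega)).1
      have hii : u i ≤ u (i+1) := humono i hin
      have hi1 : u (i+1) ≤ 1 := le_trans (hchain (i+1) (by omega)).2 ht1
      have hb := claim1 (u i) (u (i+1)) h0i hii hi1
      have e : Ξ (u i) (u (i+1)) - (I (u (i+1)) - I (u i))
          = -(I (u (i+1)) - I (u i) - Ξ (u i) (u (i+1))) := by abel
      rw [e, norm_neg]
      refine hb.trans ?_
      apply mul_le_mul_of_nonneg_left _ hKC0
      -- (u(i+1) - u i)^θ ≤ δ'^(θ-1) * (u(i+1) - u i)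
      set Δ := u (i+1) - u i with hΔdef
      have hΔ0 : 0 ≤ Δ := by rw [hΔdef]; linarith
      have hΔδ : Δ < δ' := hmesh i hin
      rcases eq_or_lt_of_le hΔ0 with hz | hpos
      · rw [← hz, Real.zero_rpow (by linarith : θ ≠ 0)]
        simp
      · have e2 : Δ^θ = Δ^(θ-1) * Δ := by
          rw [show θ = (θ-1)+1 by ring, Real.rpow_add hpos, Real.rpow_one]
          ring_nf
        rw [e2]
        apply mul_le_mul_of_nonneg_right _ hΔ0
        exact Real.rpow_le_rpow hΔ0 hΔδ.le hθ1
    have hsumΔ : ∑ i ∈ Finset.range n, (u (i+1) - u i) = t - s := by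
      rw [Finset.sum_range_sub u n, hun, hu0]
    calc ‖∑ i ∈ Finset.range n, (Ξ (u i) (u (i+1)) - (I (u (i+1)) - I (u i)))‖
        ≤ ∑ i ∈ Finset.range n, ‖Ξ (u i) (u (i+1)) - (I (u (i+1)) - I (u i))‖ :=
          norm_sum_le _ _
      _ ≤ ∑ i ∈ Finset.range n, sewK θ * C * (δ'^(θ-1) * (u (i+1) - u i)) :=
          Finset.sum_le_sum hterm
      _ = sewK θ * C * δ'^(θ-1) * (t - s) := by
          rw [← Finset.mul_sum]
          rw [show (∑ i ∈ Finset.range n, δ'^(θ-1) * (u (i+1) - u i))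
            = δ'^(θ-1) * ∑ i ∈ Finset.range n, (u (i+1) - u i) from by rw [Finset.mul_sum]]
          rw [hsumΔ]
          ring
      _ ≤ sewK θ * C * (ε/M) * 1 := by
          have hδθ : 0 ≤ δ'^(θ-1) := Real.rpow_nonneg hδ'0.le _
          have hts : 0 ≤ t - s := by linarith
          have hts1 : t - s ≤ 1 := by linarith
          have h1 : sewK θ * C * δ'^(θ-1) ≤ sewK θ * C * (ε/M) :=
            mul_le_mul_of_nonneg_left hδ'le hKC0
          have h2 : 0 ≤ sewK θ * C * δ'^(θ-1) := mul_nonneg hKC0 hδθ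
          nlinarith
      _ < ε := by
          rw [mul_one]
          have h1 : sewK θ * C < M := by rw [hMdef]; linarith
          calc sewK θ * C * (ε/M) < M * (ε/M) := mul_lt_mul_of_pos_right h1 hεM
            _ = ε := by field_simp
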